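/- Let ν be a Borel probability measure on ℝ with finite first moment, let r ≥ 0, and let B = { μ : μ a Borel probability measure on ℝ such that ∫ f dμ − ∫ f dν ≤ r for every bounded 1-Lipschitz f : ℝ → ℝ }. Let v be a real-valued function on Borel probability measures on ℝ that is bounded below and lower semicontinuous with respect to the topology of weak convergence. Then there exists F* ∈ B with v(F*) = inf_{F ∈ B} v(F), i.e. the infimum of v over the Wasserstein ball B is attained. -/

import Mathlib

open MeasureTheory Filter Set Topology
open scoped ENNReal NNReal

lemma aux_union_Ioc (t : ℕ → ℝ) (ht : Monotone t) (m : ℕ) :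
    (⋃ j ∈ Finset.range m, Set.Ioc (t j) (t (j + 1))) = Set.Ioc (t 0) (t m) := by
  induction m with
  | zero => simp
  | succ m ih =>
      rw [Finset.range_add_one]
      rw [show (⋃ j ∈ insert m (Finset.range m), Set.Ioc (t j) (t (j + 1)))
          = Set.Ioc (t m) (t (m + 1)) ∪ ⋃ j ∈ Finset.range m, Set.Ioc (t j) (t (j + 1)) by
        simp [Set.biUnion_insert]]
      rw [ih, Set.union_comm, Set.Ioc_union_Ioc_eq_Ioc (ht (Nat.zero_le m)) (ht (Nat.le_succ m))]

lemma aux_Ioc_toReal (ρ : Measure ℝ) [IsFiniteMeasure ρ] {a b : ℝ} (h : a ≤ b) :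
    (ρ (Set.Ioc a b)).toReal = (ρ (Set.Iic b)).toReal - (ρ (Set.Iic a)).toReal := by
  rw [← Set.Iic_sdiff_Iic, measure_diff (Set.Iic_subset_Iic.mpr h)
    measurableSet_Iic.nullMeasurableSet (measure_ne_top ρ _),
    ENNReal.toReal_sub_of_le (measure_mono (Set.Iic_subset_Iic.mpr h)) (measure_ne_top ρ _)]

theorem inf_attained_on_wasserstein_ball (ν : ProbabilityMeasure ℝ)
    (hν : Integrable id (ν : Measure ℝ)) (r : ℝ) (hr : 0 ≤ r)
    (v : ProbabilityMeasure ℝ → ℝ) (hbdd : ∃ c : ℝ, ∀ μ, c ≤ v μ)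
    (hlsc : LowerSemicontinuous v) :
    ∃ Fstar ∈ {μ : ProbabilityMeasure ℝ |
        ∀ f : ℝ → ℝ, LipschitzWith 1 f → (∃ C, ∀ x, |f x| ≤ C) →
          (∫ x, f x ∂(μ : Measure ℝ)) - ∫ x, f x ∂(ν : Measure ℝ) ≤ r},
      ∀ F ∈ {μ : ProbabilityMeasure ℝ |
        ∀ f : ℝ → ℝ, LipschitzWith 1 f → (∃ C, ∀ x, |f x| ≤ C) →
          (∫ x, f x ∂(μ : Measure ℝ)) - ∫ x, f x ∂(ν : Measure ℝ) ≤ r},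
        v Fstar ≤ v F := by
  classical
  set B : Set (ProbabilityMeasure ℝ) := {μ : ProbabilityMeasure ℝ |
        ∀ f : ℝ → ℝ, LipschitzWith 1 f → (∃ C, ∀ x, |f x| ≤ C) →
          (∫ x, f x ∂(μ : Measure ℝ)) - ∫ x, f x ∂(ν : Measure ℝ) ≤ r} with hBdef
  obtain ⟨c, hc⟩ := hbdd
  -- the total mass bound
  set M : ℝ := r + ∫ x, |x| ∂(ν : Measure ℝ) with hMdef
  have habs : Integrable (fun x : ℝ => |x|) (ν : Measure ℝ) := by
    simpa using hν.abs
  have hM0 : 0 ≤ M := add_nonneg hr (integral_nonneg fun x => abs_nonneg x)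
  -- CDFs
  set Fn : ProbabilityMeasure ℝ → ℝ → ℝ :=
    fun μ x => ((μ : Measure ℝ) (Iic x)).toReal with hFndef
  have hFnmono : ∀ μ : ProbabilityMeasure ℝ, Monotone (Fn μ) := by
    intro μ x y hxy
    exact ENNReal.toReal_mono (measure_ne_top _ _) (measure_mono (Iic_subset_Iic.mpr hxy))
  have hFn0 : ∀ (μ : ProbabilityMeasure ℝ) x, 0 ≤ Fn μ x := fun μ x => ENNReal.toReal_nonneg
  have hFn1 : ∀ (μ : ProbabilityMeasure ℝ) x, Fn μ x ≤ 1 := by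
    intro μ x
    have := measure_mono (μ := (μ : Measure ℝ)) (subset_univ (Iic x))
    simpa [hFndef] using ENNReal.toReal_mono (by simp) this
  -- tail bounds on B
  have htail : ∀ μ ∈ B, ∀ R : ℝ, 0 < R →
      (((μ : ProbabilityMeasure ℝ) : Measure ℝ) {x | R ≤ |x|}).toReal ≤ M / R := by
    intro μ hμ R hR
    set g : ℝ → ℝ := fun x => min |x| R with hgdef
    have hglip : LipschitzWith 1 g := by
      have h1 : LipschitzWith 1 (fun x : ℝ => |x|) := by
        exact lipschitzWith_one_norm (E := ℝ)
      have h2 : LipschitzWith 1 (fun _ : ℝ => R) := (LipschitzWith.const R).weaken zero_le_one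
      simpa using h1.min h2
    have hgbd : ∀ x, |g x| ≤ R := by
      intro x
      rw [abs_le]
      constructor
      · have : (0:ℝ) ≤ g x := le_min (abs_nonneg x) hR.le
        linarith
      · exact min_le_right _ _
    have hgint : ∀ ρ : Measure ℝ, IsProbabilityMeasure ρ → Integrable g ρ := by
      intro ρ hρ
      exact (BoundedContinuousFunction.ofNormedAddCommGroup g hglip.continuous R
        (fun x => by simpa using hgbd x)).integrable ρ
    have hineq := hμ g hglip ⟨R, hgbd⟩
    have hgν : ∫ x, g x ∂(ν : Measure ℝ) ≤ ∫ x, |x| ∂(ν : Measure ℝ) :=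
      integral_mono (hgint _ inferInstance) habs (fun x => min_le_left _ _)
    have hgM : ∫ x, g x ∂((μ : ProbabilityMeasure ℝ) : Measure ℝ) ≤ M := by
      rw [hMdef]; linarith
    have hmarkov := mul_meas_ge_le_integral_of_nonneg
      (μ := ((μ : ProbabilityMeasure ℝ) : Measure ℝ))
      (ae_of_all _ (fun x => le_min (abs_nonneg x) hR.le)) (hgint _ inferInstance) R
    have hsub : {x : ℝ | R ≤ |x|} ⊆ {x : ℝ | R ≤ g x} := by
      intro x hx
      have hx' : R ≤ |x| := hx
      simp only [mem_setOf_eq, hgdef]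
      rw [min_eq_right hx']
    have hmono := ENNReal.toReal_mono (measure_ne_top _ _)
      (measure_mono (μ := ((μ : ProbabilityMeasure ℝ) : Measure ℝ)) hsub)
    have : R * (((μ : ProbabilityMeasure ℝ) : Measure ℝ) {x | R ≤ |x|}).toReal ≤ M := by
      calc R * (((μ : ProbabilityMeasure ℝ) : Measure ℝ) {x | R ≤ |x|}).toReal
          ≤ R * (((μ : ProbabilityMeasure ℝ) : Measure ℝ) {x | R ≤ g x}).toReal := by
            exact mul_le_mul_of_nonneg_left hmono hR.le
        _ ≤ ∫ x, g x ∂((μ : ProbabilityMeasure ℝ) : Measure ℝ) := hmarkov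
        _ ≤ M := hgM
    rw [le_div_iff₀ hR]
    linarith [this]
  -- CDF lower bound (at positive reals) and upper bound (at negative reals), uniformly on B
  have hcdf_lb : ∀ μ ∈ B, ∀ R : ℝ, 0 < R → 1 - M / R ≤ Fn μ R := by
    intro μ hμ R hR
    have hsubset : (univ : Set ℝ) ⊆ Iic R ∪ {x | R ≤ |x|} := by
      intro x _
      rcases le_or_gt x R with h | h
      · exact Or.inl h
      · exact Or.inr (le_trans h.le (le_abs_self x))
    have h1 : (1:ℝ≥0∞) ≤ ((μ : Measure ℝ) (Iic R)) + ((μ : Measure ℝ) {x | R ≤ |x|}) := by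
      calc (1:ℝ≥0∞) = (μ : Measure ℝ) univ := by simp
        _ ≤ (μ : Measure ℝ) (Iic R ∪ {x | R ≤ |x|}) := measure_mono hsubset
        _ ≤ _ := measure_union_le _ _
    have h2 : (1:ℝ) ≤ Fn μ R + ((μ : Measure ℝ) {x | R ≤ |x|}).toReal := by
      have := ENNReal.toReal_mono (by
        exact ENNReal.add_ne_top.mpr ⟨measure_ne_top _ _, measure_ne_top _ _⟩) h1
      simpa [ENNReal.toReal_add (measure_ne_top _ _) (measure_ne_top _ _)] using this
    have := htail μ hμ R hR
    simp only [hFndef]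
    linarith
  have hcdf_ub : ∀ μ ∈ B, ∀ R : ℝ, 0 < R → Fn μ (-R) ≤ M / R := by
    intro μ hμ R hR
    have hsubset : Iic (-R) ⊆ {x : ℝ | R ≤ |x|} := by
      intro x hx
      simp only [mem_Iic] at hx
      simp only [mem_setOf_eq]
      rw [abs_of_nonpos (by linarith)]
      linarith
    exact le_trans (ENNReal.toReal_mono (measure_ne_top _ _) (measure_mono hsubset))
      (htail μ hμ R hR)
  -- ν belongs to B
  have hνB : ν ∈ B := by
    intro f _ _
    simpa using hr
  -- minimizing sequence
  have hSne : (v '' B).Nonempty := ⟨v ν, ν, hνB, rfl⟩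
  have hSbdd : BddBelow (v '' B) := ⟨c, by rintro y ⟨μ, -, rfl⟩; exact hc μ⟩
  obtain ⟨u, -, hu_tendsto, hu_mem⟩ := exists_seq_tendsto_sInf hSne hSbdd
  choose μseq hμseqB hμseqv using fun n => hu_mem n
  -- diagonal extraction on rationals
  have hpi : IsCompact (univ.pi (fun _ : ℚ => Icc (0:ℝ) 1)) :=
    isCompact_univ_pi (fun _ => isCompact_Icc)
  have hmem : ∀ n, (fun q : ℚ => Fn (μseq n) q) ∈ univ.pi (fun _ : ℚ => Icc (0:ℝ) 1) := by
    intro n q _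
    exact ⟨hFn0 _ _, hFn1 _ _⟩
  obtain ⟨G, hGmem, φ, hφmono, hφtendsto⟩ := hpi.tendsto_subseq hmem
  have hGq : ∀ q : ℚ, Tendsto (fun n => Fn (μseq (φ n)) q) atTop (𝓝 (G q)) := by
    intro q
    exact (tendsto_pi_nhds.mp hφtendsto) q
  have hGmono : ∀ p q : ℚ, p ≤ q → G p ≤ G q := by
    intro p q hpq
    exact le_of_tendsto_of_tendsto (hGq p) (hGq q)
      (Eventually.of_forall fun n => hFnmono _ (by exact_mod_cast hpq))
  have hG0 : ∀ q : ℚ, 0 ≤ G q := fun q => (hGmem q (mem_univ q)).1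
  have hG1 : ∀ q : ℚ, G q ≤ 1 := fun q => (hGmem q (mem_univ q)).2
  have hGlb : ∀ q : ℚ, 0 < (q:ℝ) → 1 - M / q ≤ G q := by
    intro q hq
    exact ge_of_tendsto (hGq q)
      (Eventually.of_forall fun n => hcdf_lb _ (hμseqB (φ n)) q hq)
  have hGub : ∀ q : ℚ, (q:ℝ) < 0 → G q ≤ M / (-(q:ℝ)) := by
    intro q hq
    refine le_of_tendsto (hGq q) (Eventually.of_forall fun n => ?_)
    have := hcdf_ub _ (hμseqB (φ n)) (-(q:ℝ)) (by linarith)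
    simpa using this
  -- the limit CDF
  have hne : ∀ x : ℝ, Nonempty {q : ℚ // x < (q:ℝ)} := by
    intro x
    obtain ⟨q, hq⟩ := exists_rat_gt x
    exact ⟨⟨q, hq⟩⟩
  set F : ℝ → ℝ := fun x => ⨅ q : {q : ℚ // x < (q:ℝ)}, G q with hFdef
  have hbdd_range : ∀ x : ℝ, BddBelow (range (fun q : {q : ℚ // x < (q:ℝ)} => G q)) := by
    intro x
    exact ⟨0, by rintro y ⟨q, rfl⟩; exact hG0 _⟩
  have hFleG : ∀ (x : ℝ) (q : ℚ), x < (q:ℝ) → F x ≤ G q := by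
    intro x q hq
    haveI := hne x
    exact ciInf_le (hbdd_range x) ⟨q, hq⟩
  have hGleF : ∀ (x : ℝ) (q : ℚ), (q:ℝ) < x → G q ≤ F x := by
    intro x q hq
    haveI := hne x
    refine le_ciInf fun p => hGmono q p ?_
    exact_mod_cast le_of_lt (lt_trans hq p.2)
  have hFmono : Monotone F := by
    intro x y hxy
    haveI := hne y
    refine le_ciInf fun p => ?_
    exact hFleG x p (lt_of_le_of_lt hxy p.2)
  have hF0 : ∀ x, 0 ≤ F x := by
    intro x
    haveI := hne x
    exact le_ciInf fun p => hG0 _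
  have hF1 : ∀ x, F x ≤ 1 := by
    intro x
    obtain ⟨q, hq⟩ := exists_rat_gt x
    exact le_trans (hFleG x q hq) (hG1 q)
  have hFapprox : ∀ x : ℝ, ∀ ε : ℝ, 0 < ε → ∃ q : ℚ, x < (q:ℝ) ∧ G q < F x + ε := by
    intro x ε hε
    haveI := hne x
    have : F x < F x + ε := by linarith
    obtain ⟨q, hq⟩ := exists_lt_of_ciInf_lt this
    exact ⟨q.1, q.2, hq⟩
  -- right continuity
  have hrc : ∀ x, ContinuousWithinAt F (Ici x) x := by
    intro x
    rw [ContinuousWithinAt]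
    rw [Metric.tendsto_nhds]
    intro ε hε
    obtain ⟨q, hq1, hq2⟩ := hFapprox x ε hε
    have hIio : Iio ((q:ℝ)) ∈ 𝓝[Ici x] x :=
      mem_nhdsWithin_of_mem_nhds (Iio_mem_nhds hq1)
    filter_upwards [hIio, self_mem_nhdsWithin] with y hy1 hy2
    rw [Real.dist_eq, abs_sub_lt_iff]
    have h1 : F x ≤ F y := hFmono hy2
    have h2 : F y ≤ G q := hFleG y q hy1
    constructor <;> linarith
  set StF : StieltjesFunction ℝ := ⟨F, hFmono, hrc⟩ with hStFdef
  -- limits at infinity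
  have htop : Tendsto F atTop (𝓝 1) := by
    have hlow : ∀ᶠ x : ℝ in atTop, 1 - M / (x - 1) ≤ F x := by
      filter_upwards [eventually_ge_atTop (2:ℝ)] with x hx
      obtain ⟨q, hq1, hq2⟩ := exists_rat_btwn (show x - 1 < x by linarith)
      have hq0 : (0:ℝ) < q := by linarith
      have := hGleF x q hq2
      have := hGlb q hq0
      have hdiv : M / (q:ℝ) ≤ M / (x - 1) :=
        div_le_div_of_nonneg_left hM0 (by linarith) hq1.le
      linarith
    have hup : ∀ᶠ x : ℝ in atTop, F x ≤ 1 := Eventually.of_forall hF1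
    have hlim : Tendsto (fun x : ℝ => 1 - M / (x - 1)) atTop (𝓝 1) := by
      have h1 : Tendsto (fun x : ℝ => x - 1) atTop atTop :=
        tendsto_atTop_add_const_right atTop (-1) tendsto_id
      have h2 : Tendsto (fun x : ℝ => M / (x - 1)) atTop (𝓝 0) := by
        simpa [div_eq_mul_inv] using (h1.inv_tendsto_atTop).const_mul M
      simpa using tendsto_const_nhds.sub h2
    exact tendsto_of_tendsto_of_tendsto_of_le_of_le' hlim tendsto_const_nhds hlow hup
  have hbot : Tendsto F atBot (𝓝 0) := by
    have hup : ∀ᶠ x : ℝ in atBot, F x ≤ M / (-x - 1) := by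
      filter_upwards [eventually_le_atBot (-2:ℝ)] with x hx
      obtain ⟨q, hq1, hq2⟩ := exists_rat_btwn (show x < x + 1 by linarith)
      have hqneg : (q:ℝ) < 0 := by linarith
      have h1 := hFleG x q hq1
      have h2 := hGub q hqneg
      have hdiv : M / (-(q:ℝ)) ≤ M / (-x - 1) :=
        div_le_div_of_nonneg_left hM0 (by linarith) (by linarith)
      linarith
    have hlow : ∀ᶠ x : ℝ in atBot, 0 ≤ F x := Eventually.of_forall hF0
    have hlim : Tendsto (fun x : ℝ => M / (-x - 1)) atBot (𝓝 0) := by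
      have h1 : Tendsto (fun x : ℝ => -x - 1) atBot atTop :=
        tendsto_atTop_add_const_right atBot (-1) tendsto_neg_atBot_atTop
      simpa [div_eq_mul_inv] using (h1.inv_tendsto_atTop).const_mul M
    exact tendsto_of_tendsto_of_tendsto_of_le_of_le' tendsto_const_nhds hlim hlow hup
  have hStFtop : Tendsto StF atTop (𝓝 1) := htop
  have hStFbot : Tendsto StF atBot (𝓝 0) := hbot
  haveI hprob : IsProbabilityMeasure StF.measure :=
    ⟨by rw [StF.measure_univ hStFbot hStFtop]; simp⟩
  set Fstar : ProbabilityMeasure ℝ := ⟨StF.measure, hprob⟩ with hFstardef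
  have hIic : ∀ x, (StF.measure (Iic x)).toReal = F x := by
    intro x
    rw [StF.measure_Iic hStFbot x]
    simp [ENNReal.toReal_ofReal (hF0 x)]
    exact ENNReal.toReal_ofReal (hF0 x)
  -- continuity points
  set D : Set ℝ := {x | ContinuousAt F x} with hDdef
  have hDdense : Dense D := by
    have hcount : {x : ℝ | ¬ContinuousAt F x}.Countable := hFmono.countable_not_continuousAt
    have := hcount.dense_compl ℝ
    have hEq : {x : ℝ | ¬ContinuousAt F x}ᶜ = D := by
      ext x; simp [hDdef]
    rwa [hEq] at this
  -- CDF convergence at continuity points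
  have hcdfD : ∀ x ∈ D, Tendsto (fun n => Fn (μseq (φ n)) x) atTop (𝓝 (F x)) := by
    intro x hx
    rw [Metric.tendsto_nhds]
    intro ε hε
    -- upper approx
    obtain ⟨q, hq1, hq2⟩ := hFapprox x (ε/2) (by linarith)
    -- lower approx via continuity
    have hcont : ContinuousAt F x := hx
    obtain ⟨δ, hδ, hδprop⟩ := Metric.continuousAt_iff.mp hcont (ε/2) (by linarith)
    have hylt : F x - ε/2 < F (x - δ/2) := by
      have := hδprop (show dist (x - δ/2) x < δ by
        rw [Real.dist_eq]; rw [abs_sub_lt_iff]; constructor <;> linarith)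
      rw [Real.dist_eq, abs_sub_lt_iff] at this
      linarith
    obtain ⟨p, hp1, hp2⟩ := exists_rat_btwn (show x - δ/2 < x by linarith)
    have hpG : F x - ε/2 < G p := lt_of_lt_of_le hylt (hFleG _ p hp1)
    have hev1 : ∀ᶠ n in atTop, Fn (μseq (φ n)) q < F x + ε :=
      (hGq q).eventually_lt_const (by linarith)
    have hev2 : ∀ᶠ n in atTop, F x - ε < Fn (μseq (φ n)) p :=
      (hGq p).eventually_const_lt (by linarith)
    filter_upwards [hev1, hev2] with n h1 h2
    rw [Real.dist_eq, abs_sub_lt_iff]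
    have hm1 : Fn (μseq (φ n)) x ≤ Fn (μseq (φ n)) q := hFnmono _ hq1.le
    have hm2 : Fn (μseq (φ n)) p ≤ Fn (μseq (φ n)) x := hFnmono _ hp2.le
    constructor <;> linarith
  -- coercion helper
  have hcoereal : ∀ (ρ : ProbabilityMeasure ℝ) (s : Set ℝ),
      ((ρ s : ℝ≥0) : ℝ) = ((ρ : Measure ℝ) s).toReal := by
    intro ρ s
    rw [← ENNReal.coe_toReal, ρ.ennreal_coeFn_eq_coeFn_toMeasure s]
  -- the open-set liminf condition
  have hopens : ∀ U : Set ℝ, IsOpen U →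
      Fstar U ≤ atTop.liminf (fun n => μseq (φ n) U) := by
    intro U hU
    refine le_of_forall_lt_imp_le_of_dense ?_
    intro cc hcc
    have hclt : (cc : ℝ≥0∞) < StF.measure U := by
      have := ENNReal.coe_lt_coe.mpr hcc
      rwa [Fstar.ennreal_coeFn_eq_coeFn_toMeasure] at this
    rw [hU.measure_eq_iSup_isCompact] at hclt
    rw [lt_iSup_iff] at hclt
    obtain ⟨K, hclt⟩ := hclt
    rw [lt_iSup_iff] at hclt
    obtain ⟨hKU, hclt⟩ := hclt
    rw [lt_iSup_iff] at hclt
    obtain ⟨hKcomp, hcK⟩ := hclt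
    obtain ⟨δ, hδ, hthick⟩ := hKcomp.exists_thickening_subset_open hU hKU
    obtain ⟨R0, hKR0⟩ := hKcomp.isBounded.subset_closedBall 0
    set R : ℝ := max R0 0 with hRdef
    have hKR : K ⊆ Icc (-R) R := by
      intro x hx
      have h := hKR0 hx
      rw [Real.closedBall_eq_Icc] at h
      obtain ⟨h1, h2⟩ := h
      have h3 := le_max_left R0 0
      constructor <;> simp only [hRdef] <;> linarith
    set cg : ℝ := δ / 2 with hcgdef
    have hcg : 0 < cg := by positivity
    set a : ℝ := -R - δ with hadef
    -- grid of continuity points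
    have hgrid : ∀ j : ℕ, ∃ s, s ∈ D ∧ s ∈ Ioo (a + j * cg) (a + j * cg + cg / 2) := by
      intro j
      exact hDdense.exists_mem_open isOpen_Ioo (nonempty_Ioo.mpr (by linarith))
    choose t ht1 ht2 using hgrid
    have hstep : ∀ j, t j < t (j + 1) := by
      intro j
      have h1 := (ht2 j).2
      have h2 := (ht2 (j + 1)).1
      push_cast at h2
      linarith
    have htmono : Monotone t := (strictMono_nat_of_lt_succ hstep).monotone
    have hmesh : ∀ j, t (j + 1) - t j < δ := by
      intro j
      have h1 := (ht2 j).1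
      have h2 := (ht2 (j + 1)).2
      push_cast at h2
      have : cg / 2 + cg < δ := by rw [hcgdef]; linarith
      linarith
    obtain ⟨m, hm⟩ := exists_nat_gt ((R - a) / cg)
    have htm : R < t m := by
      have h1 := (ht2 m).1
      have h2 : R - a < m * cg := (div_lt_iff₀ hcg).mp hm
      linarith
    have ht0 : t 0 < -R := by
      have := (ht2 0).2
      simp only [Nat.cast_zero, zero_mul, add_zero] at this
      rw [hadef, hcgdef] at this
      linarith
    have hKsub : K ⊆ Ioc (t 0) (t m) := by
      intro x hx
      obtain ⟨hx1, hx2⟩ := hKR hx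
      exact ⟨by linarith, by linarith⟩
    set J : Finset ℕ := (Finset.range m).filter
      (fun j => (Ioc (t j) (t (j + 1)) ∩ K).Nonempty) with hJdef
    set S : Set ℝ := ⋃ j ∈ J, Ioc (t j) (t (j + 1)) with hSdef
    have hKS : K ⊆ S := by
      intro x hx
      have hmem : x ∈ ⋃ j ∈ Finset.range m, Ioc (t j) (t (j + 1)) := by
        rw [aux_union_Ioc t htmono m]
        exact hKsub hx
      rw [mem_iUnion₂] at hmem
      obtain ⟨j, hj, hxj⟩ := hmem
      rw [hSdef, mem_iUnion₂]
      refine ⟨j, ?_, hxj⟩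
      rw [hJdef, Finset.mem_filter]
      exact ⟨hj, ⟨x, hxj, hx⟩⟩
    have hSU : S ⊆ U := by
      intro z hz
      rw [hSdef, mem_iUnion₂] at hz
      obtain ⟨j, hj, hzj⟩ := hz
      rw [hJdef, Finset.mem_filter] at hj
      obtain ⟨-, y, hyIoc, hyK⟩ := hj
      refine hthick ?_
      rw [Metric.mem_thickening_iff]
      refine ⟨y, hyK, ?_⟩
      rw [Real.dist_eq, abs_sub_lt_iff]
      have h1 := hzj.1; have h2 := hzj.2
      have h3 := hyIoc.1; have h4 := hyIoc.2
      have := hmesh j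
      constructor <;> linarith
    have hdisj : (J : Set ℕ).Pairwise (Function.onFun Disjoint
        (fun j => Ioc (t j) (t (j + 1)))) := by
      intro i _ j _ hij
      refine Ioc_disjoint_Ioc.mpr ?_
      rcases hij.lt_or_gt with h | h
      · exact le_trans (min_le_left _ _) (le_trans (htmono h) (le_max_right _ _))
      · exact le_trans (min_le_right _ _) (le_trans (htmono h) (le_max_left _ _))
    have hmeasS : ∀ ρ : Measure ℝ, IsFiniteMeasure ρ →
        (ρ S).toReal = ∑ j ∈ J, ((ρ (Iic (t (j + 1)))).toReal - (ρ (Iic (t j))).toReal) := by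
      intro ρ hρ
      haveI := hρ
      rw [hSdef, measure_biUnion_finset hdisj (fun i _ => measurableSet_Ioc),
        ENNReal.toReal_sum (fun i _ => measure_ne_top _ _)]
      exact Finset.sum_congr rfl fun j _ => aux_Ioc_toReal ρ (htmono (Nat.le_succ j))
    have hsum : Tendsto (fun n => ((μseq (φ n) : Measure ℝ) S).toReal) atTop
        (𝓝 ((StF.measure S).toReal)) := by
      have h1 : Tendsto (fun n => ∑ j ∈ J, (Fn (μseq (φ n)) (t (j + 1)) - Fn (μseq (φ n)) (t j)))
          atTop (𝓝 (∑ j ∈ J, (F (t (j + 1)) - F (t j)))) :=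
        tendsto_finset_sum _ (fun j _ => ((hcdfD _ (ht1 (j + 1))).sub (hcdfD _ (ht1 j))))
      have h2 : ∀ n, ((μseq (φ n) : Measure ℝ) S).toReal
          = ∑ j ∈ J, (Fn (μseq (φ n)) (t (j + 1)) - Fn (μseq (φ n)) (t j)) := by
        intro n
        rw [hmeasS _ inferInstance]
      have h3 : (StF.measure S).toReal = ∑ j ∈ J, (F (t (j + 1)) - F (t j)) := by
        rw [hmeasS StF.measure inferInstance]
        exact Finset.sum_congr rfl fun j _ => by rw [hIic, hIic]
      rw [h3]
      exact h1.congr (fun n => (h2 n).symm)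
    have hcS : (cc : ℝ) < (StF.measure S).toReal := by
      have hle : StF.measure K ≤ StF.measure S := measure_mono hKS
      have := lt_of_lt_of_le hcK hle
      have h2 := (ENNReal.toReal_lt_toReal ENNReal.coe_ne_top (measure_ne_top _ _)).mpr this
      simpa using h2
    have hev : ∀ᶠ n in atTop, cc ≤ μseq (φ n) U := by
      filter_upwards [hsum.eventually_const_lt hcS] with n hn
      have hle : ((μseq (φ n) : Measure ℝ) S).toReal ≤ ((μseq (φ n) : Measure ℝ) U).toReal :=
        ENNReal.toReal_mono (measure_ne_top _ _) (measure_mono hSU)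
      have : (cc : ℝ) ≤ ((μseq (φ n)) U : ℝ≥0) := by
        rw [hcoereal]
        linarith
      exact_mod_cast this
    refine le_liminf_of_le ?_ hev
    exact (isBoundedUnder_of ⟨1, fun n => (μseq (φ n)).apply_le_one U⟩).isCoboundedUnder_ge
  have htendsto : Tendsto (fun n => μseq (φ n)) atTop (𝓝 Fstar) :=
    MeasureTheory.tendsto_of_forall_isOpen_le_liminf hopens
  -- Fstar belongs to B
  have hFstarB : Fstar ∈ B := by
    intro f hlip ⟨C, hC⟩
    set g : BoundedContinuousFunction ℝ ℝ :=
      BoundedContinuousFunction.ofNormedAddCommGroup f hlip.continuous C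
        (fun x => by simpa using hC x) with hgdef
    have hgf : ∀ x, g x = f x := fun x => rfl
    have hint := ProbabilityMeasure.tendsto_iff_forall_integral_tendsto.mp htendsto g
    have hbound : ∀ n, (∫ x, g x ∂((μseq (φ n) : Measure ℝ)))
        ≤ (∫ x, f x ∂(ν : Measure ℝ)) + r := by
      intro n
      have := hμseqB (φ n) f hlip ⟨C, hC⟩
      simp only [hgf]
      linarith
    have hlim : (∫ x, g x ∂((Fstar : ProbabilityMeasure ℝ) : Measure ℝ))
        ≤ ∫ x, f x ∂(ν : Measure ℝ) + r :=
      le_of_tendsto hint (Eventually.of_forall hbound)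
    have : (∫ x, f x ∂((Fstar : ProbabilityMeasure ℝ) : Measure ℝ))
        ≤ ∫ x, f x ∂(ν : Measure ℝ) + r := by
      simpa only [hgf] using hlim
    linarith
  -- conclusion via lower semicontinuity
  have hvconv : Tendsto (fun n => v (μseq (φ n))) atTop (𝓝 (sInf (v '' B))) := by
    have : Tendsto (fun n => u (φ n)) atTop (𝓝 (sInf (v '' B))) :=
      hu_tendsto.comp (hφmono.tendsto_atTop)
    exact this.congr (fun n => (hμseqv (φ n)).symm)
  have hkey : v Fstar ≤ sInf (v '' B) := by
    by_contra hcon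
    push_neg at hcon
    obtain ⟨y, hy1, hy2⟩ := exists_between hcon
    have hev1 : ∀ᶠ n in atTop, y < v (μseq (φ n)) := by
      have := hlsc Fstar y hy2
      exact htendsto.eventually this
    have hev2 : ∀ᶠ n in atTop, v (μseq (φ n)) < y :=
      hvconv.eventually_lt_const hy1
    obtain ⟨n, h1, h2⟩ := (hev1.and hev2).exists
    linarith
  refine ⟨Fstar, hFstarB, fun F' hF' => le_trans hkey (csInf_le hSbdd ⟨F', hF', rfl⟩)⟩
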